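/- Let A be an effect on ℂ² with eigenvalues λ₁ and λ₂ in [0,1], and P the rank-one projection onto the λ₁-eigenspace (assume λ₁ ≠ λ₂). Then for a unit vector of the form x = cos(α)·x₁ + sin(α)·x₂ with x₁ a unit vector in range(P) and x₂ a unit vector orthogonal to x₁, and 0 < α < π/2, the strength function satisfies Λ(A, P_x) = λ₁λ₂ / (λ₁ sin²α + λ₂ cos²α) when λ₁, λ₂ > 0, where P_x is the projection onto ℂ·x. -/

import Mathlib

noncomputable section

/-- An effect on a complex Hilbert space: a positive operator below the identity. -/
def IsEffect {H : Type*} [NormedAddCommGroup H] [InnerProductSpace ℂ H] [CompleteSpace H]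
    (A : H →L[ℂ] H) : Prop :=
  A.IsPositive ∧ ((1 : H →L[ℂ] H) - A).IsPositive

/-- Effects `A`, `B` are coexistent: there are effects `M ≤ A`, `N ≤ I - A` with `M + N = B`. -/
def Coexistent {H : Type*} [NormedAddCommGroup H] [InnerProductSpace ℂ H] [CompleteSpace H]
    (A B : H →L[ℂ] H) : Prop :=
  ∃ M N : H →L[ℂ] H, IsEffect M ∧ IsEffect N ∧
    (A - M).IsPositive ∧ (((1 : H →L[ℂ] H) - A) - N).IsPositive ∧ M + N = B

/-- A rank-one orthogonal projection. -/
def IsRankOneProjection {H : Type*} [NormedAddCommGroup H] [InnerProductSpace ℂ H]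
    [CompleteSpace H] (P : H →L[ℂ] H) : Prop :=
  IsSelfAdjoint P ∧ P ∘L P = P ∧ Module.finrank ℂ (LinearMap.range (P : H →ₗ[ℂ] H)) = 1

/-- The strength function `Λ(B,P) = sup {λ ≥ 0 : λP ≤ B}`. -/
def strength {H : Type*} [NormedAddCommGroup H] [InnerProductSpace ℂ H] [CompleteSpace H]
    (B P : H →L[ℂ] H) : ℝ :=
  sSup {l : ℝ | 0 ≤ l ∧ (B - (l : ℂ) • P).IsPositive}

abbrev E2 := EuclideanSpace ℂ (Fin 2)

lemma quad_aux' (l1 l2 lam c s u v : ℝ) (hlam0 : 0 ≤ lam)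
    (hD : 0 < l1*s^2 + l2*c^2)
    (hlam : lam * (l1*s^2 + l2*c^2) ≤ l1*l2) :
    lam * (c*u + s*v)^2 ≤ l1*u^2 + l2*v^2 := by
  nlinarith [sq_nonneg (l1*s*u - l2*c*v), sq_nonneg (c*u+s*v), mul_nonneg hlam0 (sq_nonneg (c*u+s*v))]

open scoped InnerProductSpace ComplexConjugate in
open scoped RealInnerProductSpace in
set_option maxHeartbeats 1000000 in
theorem strength_of_qubit_effect (P : E2 →L[ℂ] E2) (hP : IsRankOneProjection P)
    (l1 l2 : ℝ) (hl1 : 0 < l1) (hl1' : l1 ≤ 1) (hl2 : 0 < l2) (hl2' : l2 ≤ 1) (hne : l1 ≠ l2)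
    (A : E2 →L[ℂ] E2) (hA : A = (l1 : ℂ) • P + (l2 : ℂ) • ((1 : E2 →L[ℂ] E2) - P))
    (x₁ x₂ : E2) (hx₁ : x₁ ∈ LinearMap.range (P : E2 →ₗ[ℂ] E2))
    (hx₁n : ‖x₁‖ = 1) (hx₂n : ‖x₂‖ = 1) (horth : inner ℂ x₁ x₂ = (0 : ℂ))
    (α : ℝ) (hα : 0 < α) (hα' : α < Real.pi / 2)
    (x : E2) (hx : x = ((Real.cos α : ℝ) : ℂ) • x₁ + ((Real.sin α : ℝ) : ℂ) • x₂)
    (Px : E2 →L[ℂ] E2)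
    (hPx : Px = (ℂ ∙ x).subtypeL ∘L Submodule.orthogonalProjection (ℂ ∙ x)) :
    strength A Px = l1 * l2 / (l1 * Real.sin α ^ 2 + l2 * Real.cos α ^ 2) := by
  obtain ⟨hPsa, hPidem, hPrank⟩ := hP
  set c : ℝ := Real.cos α with hcdef
  set s : ℝ := Real.sin α with hsdef
  have hc : 0 < c := Real.cos_pos_of_mem_Ioo ⟨by linarith [Real.pi_pos], hα'⟩
  have hs : 0 < s := Real.sin_pos_of_pos_of_lt_pi hα (by linarith [Real.pi_pos])
  have hcs2 : c ^ 2 + s ^ 2 = 1 := by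
    rw [hcdef, hsdef]; exact Real.cos_sq_add_sin_sq α
  have horth0 : ⟪x₁, x₂⟫_ℂ = (0 : ℂ) := horth
  have hx₁0 : x₁ ≠ 0 := by intro h; rw [h] at hx₁n; simp at hx₁n
  have hx₂0 : x₂ ≠ 0 := by intro h; rw [h] at hx₂n; simp at hx₂n
  have hPx₁ : P x₁ = x₁ := by
    obtain ⟨u, hu⟩ := hx₁
    have h := congrArg (fun T => T u) hPidem
    simp only [ContinuousLinearMap.comp_apply] at h
    have hu2 : P u = x₁ := hu
    rw [hu2] at h; exact h
  have hsa : ∀ v w : E2, ⟪P v, w⟫_ℂ = ⟪v, P w⟫_ℂ := by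
    intro v w
    rw [← ContinuousLinearMap.adjoint_inner_left, hPsa.adjoint_eq]
  have hspan : LinearMap.range (P : E2 →ₗ[ℂ] E2) = ℂ ∙ x₁ := by
    refine (Submodule.eq_of_le_of_finrank_le ?_ ?_).symm
    · rw [Submodule.span_le, Set.singleton_subset_iff]; exact hx₁
    · rw [hPrank, finrank_span_singleton hx₁0]
  have horth' : ⟪x₂, x₁⟫_ℂ = 0 := by rw [← inner_conj_symm, horth0, map_zero]
  have hone : ⟪x₁, x₁⟫_ℂ = 1 := by
    rw [inner_self_eq_norm_sq_to_K, hx₁n]; norm_num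
  have htwo : ⟪x₂, x₂⟫_ℂ = 1 := by
    rw [inner_self_eq_norm_sq_to_K, hx₂n]; norm_num
  have hPx₂ : P x₂ = 0 := by
    have hm : P x₂ ∈ ℂ ∙ x₁ := hspan ▸ LinearMap.mem_range.mpr ⟨x₂, rfl⟩
    obtain ⟨k, hk⟩ := Submodule.mem_span_singleton.mp hm
    have h1 : ⟪x₁, P x₂⟫_ℂ = 0 := by rw [← hsa, hPx₁, horth0]
    rw [← hk] at h1 ⊢
    rw [inner_smul_right, hone, mul_one] at h1
    rw [h1, zero_smul]
  have hkerspan : LinearMap.ker (P : E2 →ₗ[ℂ] E2) = ℂ ∙ x₂ := by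
    refine (Submodule.eq_of_le_of_finrank_le ?_ ?_).symm
    · rw [Submodule.span_le, Set.singleton_subset_iff]
      exact LinearMap.mem_ker.mpr (by simpa using hPx₂)
    · have hrn := LinearMap.finrank_range_add_finrank_ker (P : E2 →ₗ[ℂ] E2)
      rw [hPrank, finrank_euclideanSpace_fin] at hrn
      rw [finrank_span_singleton hx₂0]
      omega
  have hker : ∀ w : E2, ⟪x₁, w⟫_ℂ = 0 → ⟪x₂, w⟫_ℂ = 0 → w = 0 := by
    intro w h1 h2
    have hPw : P w = 0 := by
      have hm : P w ∈ ℂ ∙ x₁ := hspan ▸ LinearMap.mem_range.mpr ⟨w, rfl⟩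
      obtain ⟨k, hk⟩ := Submodule.mem_span_singleton.mp hm
      have h3 : ⟪x₁, P w⟫_ℂ = 0 := by rw [← hsa, hPx₁, h1]
      rw [← hk, inner_smul_right, hone, mul_one] at h3
      rw [← hk, h3, zero_smul]
    have hm : w ∈ ℂ ∙ x₂ := hkerspan ▸ LinearMap.mem_ker.mpr (by simpa using hPw)
    obtain ⟨k, hk⟩ := Submodule.mem_span_singleton.mp hm
    have h3 : ⟪x₂, w⟫_ℂ = k := by rw [← hk, inner_smul_right, htwo, mul_one]
    rw [h2] at h3
    rw [← hk, ← h3, zero_smul]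
  have hdecomp : ∀ y : E2, y = ⟪x₁, y⟫_ℂ • x₁ + ⟪x₂, y⟫_ℂ • x₂ := by
    intro y
    have h := hker (y - (⟪x₁, y⟫_ℂ • x₁ + ⟪x₂, y⟫_ℂ • x₂))
      (by simp [inner_sub_right, inner_add_right, inner_smul_right, hone, horth0, hx₁n])
      (by simp [inner_sub_right, inner_add_right, inner_smul_right, htwo, horth', hx₂n])
    exact (sub_eq_zero.mp h)
  -- norm of x and formula for Px
  have hxn : ‖x‖ = 1 := by
    have h1 : ⟪x, x⟫_ℂ = 1 := by
      rw [hx]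
      simp only [inner_add_left, inner_add_right, inner_smul_left, inner_smul_right,
        hone, htwo, horth0, horth', Complex.conj_ofReal, mul_zero, mul_one, add_zero,
        zero_add]
      norm_cast
      nlinarith
    have h2 : ‖x‖ ^ 2 = 1 := by
      rw [← inner_self_eq_norm_sq (𝕜 := ℂ), h1]
      simp
    nlinarith [norm_nonneg x]
  have hPxy : ∀ y : E2, Px y = ⟪x, y⟫_ℂ • x := by
    intro y
    rw [hPx]
    exact Submodule.starProjection_unit_singleton ℂ hxn y
  -- the key inner-product formula
  have hinner : ∀ (lam : ℝ) (a b : ℂ),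
      ⟪(A - (lam : ℂ) • Px) (a • x₁ + b • x₂), a • x₁ + b • x₂⟫_ℂ =
      ((l1 * Complex.normSq a + l2 * Complex.normSq b
        - lam * Complex.normSq ((c : ℂ) * a + (s : ℂ) * b) : ℝ) : ℂ) := by
    intro lam a b
    have hPab : P (a • x₁ + b • x₂) = a • x₁ := by
      rw [map_add, map_smul, map_smul, hPx₁, hPx₂, smul_zero, add_zero]
    have hxab : ⟪x, a • x₁ + b • x₂⟫_ℂ = (c : ℂ) * a + (s : ℂ) * b := by
      rw [hx]
      simp only [inner_add_left, inner_add_right, inner_smul_left, inner_smul_right,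
        hone, htwo, horth0, horth', Complex.conj_ofReal, mul_zero, mul_one, add_zero,
        zero_add]
      ring
    rw [ContinuousLinearMap.sub_apply, ContinuousLinearMap.smul_apply, hPxy, hxab]
    rw [hA]
    simp only [ContinuousLinearMap.add_apply, ContinuousLinearMap.smul_apply,
      ContinuousLinearMap.sub_apply, ContinuousLinearMap.one_apply, hPab]
    rw [hx]
    push_cast [Complex.normSq_eq_conj_mul_self]
    simp only [inner_sub_left, inner_add_left, inner_add_right, inner_smul_left,
      inner_smul_right, hone, htwo, horth0, horth', Complex.conj_ofReal, map_add,
      map_mul, map_sub, Complex.conj_conj]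
    ring
  -- self-adjointness
  have hPsa' : ContinuousLinearMap.adjoint P = P := ContinuousLinearMap.isSelfAdjoint_iff'.mp hPsa
  have hPxsa : IsSelfAdjoint Px := by
    rw [hPx]; exact isSelfAdjoint_starProjection _
  have hPxsa' : ContinuousLinearMap.adjoint Px = Px :=
    ContinuousLinearMap.isSelfAdjoint_iff'.mp hPxsa
  have hAsa : IsSelfAdjoint A := by
    rw [hA, ContinuousLinearMap.isSelfAdjoint_iff']
    rw [map_add, map_smulₛₗ, map_smulₛₗ, map_sub, hPsa']
    simp only [Complex.conj_ofReal]
    congr 1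
    rw [show ContinuousLinearMap.adjoint (1 : E2 →L[ℂ] E2) = 1 from
      ContinuousLinearMap.isSelfAdjoint_iff'.mp (IsSelfAdjoint.one _)]
  have hTsa : ∀ lam : ℝ, IsSelfAdjoint (A - (lam : ℂ) • Px) := by
    intro lam
    rw [ContinuousLinearMap.isSelfAdjoint_iff']
    rw [map_sub, map_smulₛₗ, ContinuousLinearMap.isSelfAdjoint_iff'.mp hAsa, hPxsa']
    simp only [Complex.conj_ofReal]
  -- notation
  set D : ℝ := l1 * s ^ 2 + l2 * c ^ 2 with hDdef
  have hD : 0 < D := by positivity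
  set cstar : ℝ := l1 * l2 / D with hcstardef
  have hcstar0 : 0 < cstar := by positivity
  have hcstarD : cstar * D = l1 * l2 := div_mul_cancel₀ _ (ne_of_gt hD)
  -- key re formula
  have hre : ∀ (lam : ℝ) (y : E2),
      (A - (lam : ℂ) • Px).reApplyInnerSelf y =
      l1 * Complex.normSq ⟪x₁, y⟫_ℂ + l2 * Complex.normSq ⟪x₂, y⟫_ℂ
        - lam * Complex.normSq ((c : ℂ) * ⟪x₁, y⟫_ℂ + (s : ℂ) * ⟪x₂, y⟫_ℂ) := by
    intro lam y
    rw [ContinuousLinearMap.reApplyInnerSelf_apply]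
    conv_lhs => rw [hdecomp y]
    rw [hinner]
    exact Complex.ofReal_re _
  -- upper bound for elements of the set
  have hub : ∀ l : ℝ, 0 ≤ l → (A - (l : ℂ) • Px).IsPositive → l ≤ cstar := by
    intro l hl0 hpos
    have h := hpos.2 (((c * l2 : ℝ) : ℂ) • x₁ + ((s * l1 : ℝ) : ℂ) • x₂)
    rw [hre] at h
    have ha1 : ⟪x₁, ((c * l2 : ℝ) : ℂ) • x₁ + ((s * l1 : ℝ) : ℂ) • x₂⟫_ℂ = ((c * l2 : ℝ) : ℂ) := by
      simp [inner_add_right, inner_smul_right, hone, horth0, hx₁n]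
    have ha2 : ⟪x₂, ((c * l2 : ℝ) : ℂ) • x₁ + ((s * l1 : ℝ) : ℂ) • x₂⟫_ℂ = ((s * l1 : ℝ) : ℂ) := by
      simp [inner_add_right, inner_smul_right, htwo, horth', hx₂n]
    rw [ha1, ha2] at h
    rw [show ((c : ℂ) * ((c * l2 : ℝ) : ℂ) + (s : ℂ) * ((s * l1 : ℝ) : ℂ))
        = (((c * (c * l2) + s * (s * l1) : ℝ)) : ℂ) by push_cast; ring] at h
    rw [Complex.normSq_ofReal, Complex.normSq_ofReal, Complex.normSq_ofReal] at h
    rw [hcstardef, le_div_iff₀ hD, hDdef]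
    have hD' : 0 < l1 * s ^ 2 + l2 * c ^ 2 := by rw [← hDdef]; exact hD
    nlinarith [h, hD', mul_pos hl1 hl2]
  -- membership of cstar
  have hmem : (A - ((cstar : ℝ) : ℂ) • Px).IsPositive := by
    refine ⟨(hTsa cstar).isSymmetric, ?_⟩
    intro y
    rw [hre]
    set a : ℂ := ⟪x₁, y⟫_ℂ
    set b : ℂ := ⟪x₂, y⟫_ℂ
    have habs : ‖(c : ℂ) * a + (s : ℂ) * b‖ ≤ c * ‖a‖ + s * ‖b‖ := by
      calc ‖(c : ℂ) * a + (s : ℂ) * b‖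
          ≤ ‖(c : ℂ) * a‖ + ‖(s : ℂ) * b‖ := norm_add_le _ _
        _ = c * ‖a‖ + s * ‖b‖ := by
            rw [norm_mul, norm_mul, Complex.norm_real, Complex.norm_real, Real.norm_eq_abs, Real.norm_eq_abs,
              abs_of_pos hc, abs_of_pos hs]
    have hn : Complex.normSq ((c : ℂ) * a + (s : ℂ) * b)
        ≤ (c * ‖a‖ + s * ‖b‖) ^ 2 := by
      rw [Complex.normSq_eq_norm_sq]
      have h0 : 0 ≤ ‖(c : ℂ) * a + (s : ℂ) * b‖ := norm_nonneg _
      nlinarith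
    have hq := quad_aux' l1 l2 cstar c s ‖a‖ ‖b‖
      (le_of_lt hcstar0) hD (le_of_eq hcstarD)
    rw [← Complex.normSq_eq_norm_sq, ← Complex.normSq_eq_norm_sq] at hq
    nlinarith [mul_le_mul_of_nonneg_left hn (le_of_lt hcstar0)]
  -- conclusion
  rw [strength]
  have hS : ∀ l ∈ {l : ℝ | 0 ≤ l ∧ (A - (l : ℂ) • Px).IsPositive}, l ≤ cstar :=
    fun l hl => hub l hl.1 hl.2
  refine le_antisymm (Real.sSup_le hS (le_of_lt hcstar0)) ?_
  exact le_csSup ⟨cstar, hS⟩ ⟨le_of_lt hcstar0, hmem⟩
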